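/- Let c be a proper partial edge coloring of a graph G and let ab be an uncolored edge. A candidate color β for ab (a color appearing on no edge incident to a or b) fails to be valid (i.e., assigning β to ab creates a bichromatic cycle) if and only if there exists a color α, appearing both on an edge at a (other than ab) and on an edge at b (other than ab), such that G contains an (α,β)-bichromatic path from a to b beginning and ending with edges colored α. -/

import Mathlib

open SimpleGraph

noncomputable def edeg {V : Type*} (G : SimpleGraph V) (v : V) : ℕ :=
  {u | G.Adj v u}.ncard

def IsProperEdgeColoring {V : Type*} (G : SimpleGraph V) (c : Sym2 V → ℕ) : Prop :=
  ∀ e₁ ∈ G.edgeSet, ∀ e₂ ∈ G.edgeSet, e₁ ≠ e₂ → (∃ v, v ∈ e₁ ∧ v ∈ e₂) → c e₁ ≠ c e₂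

def IsAcyclicEdgeColoring {V : Type*} (G : SimpleGraph V) (c : Sym2 V → ℕ) : Prop :=
  IsProperEdgeColoring G c ∧
  ∀ (v : V) (w : G.Walk v v), w.IsCycle →
    ¬ ∃ α β : ℕ, ∀ e ∈ w.edges, c e = α ∨ c e = β

noncomputable def acyclicChromaticIndex {V : Type*} (G : SimpleGraph V) : ℕ :=
  sInf {n | ∃ c : Sym2 V → ℕ, IsAcyclicEdgeColoring G c ∧ ∀ e ∈ G.edgeSet, c e < n}

def IsProperPartial {V : Type*} (G : SimpleGraph V) (c : Sym2 V → Option ℕ) : Prop :=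
  (∀ e, c e ≠ none → e ∈ G.edgeSet) ∧
  ∀ e₁ ∈ G.edgeSet, ∀ e₂ ∈ G.edgeSet, e₁ ≠ e₂ → (∃ v, v ∈ e₁ ∧ v ∈ e₂) →
    ∀ k : ℕ, c e₁ = some k → c e₂ ≠ some k

def HasBichromaticCycle {V : Type*} (G : SimpleGraph V) (c : Sym2 V → Option ℕ) : Prop :=
  ∃ (v : V) (w : G.Walk v v), w.IsCycle ∧
    ∃ α β : ℕ, ∀ e ∈ w.edges, c e = some α ∨ c e = some β


lemma cycle_path_aux {V : Type*} [DecidableEq V] {G : SimpleGraph V} {a b : V}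
    (hne : a ≠ b) (w : G.Walk a a) (hw : w.IsCycle) (he : s(a,b) ∈ w.edges) :
    ∃ p : G.Walk a b, p.IsPath ∧ s(a,b) ∉ p.edges ∧ ∀ f ∈ p.edges, f ∈ w.edges := by
  cases w with
  | nil => simp at he
  | @cons _ x _ h q =>
    obtain ⟨hq, hnx⟩ := (Walk.cons_isCycle_iff q h).mp hw
    rw [Walk.edges_cons] at he
    rcases List.mem_cons.mp he with h1 | h2
    · have hx : b = x := Sym2.congr_right.mp h1
      subst hx
      refine ⟨q.reverse, hq.reverse, ?_, ?_⟩
      · rw [Walk.edges_reverse, List.mem_reverse]; exact fun hc => hnx (h1 ▸ hc)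
      · intro f hf
        rw [Walk.edges_reverse, List.mem_reverse] at hf
        rw [Walk.edges_cons]; exact List.mem_cons.mpr (Or.inr hf)
    · have hb : b ∈ q.support := Walk.snd_mem_support_of_mem_edges q h2
      have hr : (q.takeUntil b hb).IsPath := hq.takeUntil hb
      have hnar : a ∉ (q.takeUntil b hb).support := by
        have hnd : q.support.Nodup := hq.support_nodup
        rw [← q.take_spec hb, Walk.support_append, List.nodup_append] at hnd
        have haind : a ∈ (q.dropUntil b hb).support.tail := by
          have h3 := (q.dropUntil b hb).end_mem_support
          rw [Walk.support_eq_cons] at h3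
          rcases List.mem_cons.mp h3 with h4 | h4
          · exact absurd h4 hne
          · exact h4
        exact fun hc => hnd.2.2 a hc a haind rfl
      refine ⟨Walk.cons h (q.takeUntil b hb), hr.cons hnar, ?_, ?_⟩
      · rw [Walk.edges_cons]
        intro hc
        rcases List.mem_cons.mp hc with h4 | h4
        · have : b = x := Sym2.congr_right.mp h4
          exact hnx (this ▸ h2)
        · exact hnar (Walk.fst_mem_support_of_mem_edges _ h4)
      · intro f hf
        rw [Walk.edges_cons] at hf ⊢
        rcases List.mem_cons.mp hf with h4 | h4
        · exact h4 ▸ List.mem_cons_self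
        · exact List.mem_cons.mpr (Or.inr (q.edges_takeUntil_subset hb h4))

lemma walk_last_edge {V : Type*} {G : SimpleGraph V} {u v : V} (p : G.Walk u v) (hnn : ¬ p.Nil) :
    ∃ y, G.Adj v y ∧ p.edges.getLast? = some s(v, y) ∧ s(v, y) ∈ p.edges := by
  have hnn' : ¬ p.reverse.Nil := by
    rw [Walk.nil_iff_length_eq, Walk.length_reverse, ← Walk.nil_iff_length_eq]; exact hnn
  obtain ⟨y, h', r, hq⟩ := Walk.not_nil_iff.mp hnn'
  refine ⟨y, h', ?_, ?_⟩
  · have h1 : p.edges.getLast? = p.reverse.edges.head? := by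
      rw [Walk.edges_reverse, List.head?_reverse]
    rw [h1, hq, Walk.edges_cons, List.head?_cons]
  · have h2 : s(v, y) ∈ p.reverse.edges := by
      rw [hq, Walk.edges_cons]; exact List.mem_cons_self
    rwa [Walk.edges_reverse, List.mem_reverse] at h2

theorem stmt13 {V : Type*} [Fintype V] [DecidableEq V] (G : SimpleGraph V) (c : Sym2 V → Option ℕ)
    (hproper : IsProperPartial G c) (hacyc : ¬ HasBichromaticCycle G c)
    (a b : V) (hab : G.Adj a b) (huncol : c s(a, b) = none) (β : ℕ)
    (hcand : (∀ x : V, G.Adj a x → c s(a, x) ≠ some β) ∧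
             (∀ x : V, G.Adj b x → c s(b, x) ≠ some β)) :
    HasBichromaticCycle G (fun e => if e = s(a, b) then some β else c e) ↔
      ∃ α : ℕ,
        (∃ x : V, G.Adj a x ∧ s(a, x) ≠ s(a, b) ∧ c s(a, x) = some α) ∧
        (∃ y : V, G.Adj b y ∧ s(b, y) ≠ s(a, b) ∧ c s(b, y) = some α) ∧
        ∃ (p : G.Walk a b) (e₁ e₂ : Sym2 V), p.IsPath ∧
          (∀ e ∈ p.edges, c e = some α ∨ c e = some β) ∧
          p.edges.head? = some e₁ ∧ c e₁ = some α ∧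
          p.edges.getLast? = some e₂ ∧ c e₂ = some α := by
  constructor
  · rintro ⟨v, w, hw, γ, δ, hcol⟩
    have hmem : s(a, b) ∈ w.edges := by
      by_contra hn
      exact hacyc ⟨v, w, hw, γ, δ, fun e he => by
        have hne : e ≠ s(a, b) := fun h => hn (h ▸ he)
        exact (hcol e he).imp (fun h3 => (if_neg hne).symm.trans h3)
          (fun h3 => (if_neg hne).symm.trans h3)⟩
    have key : ∃ α : ℕ, ∀ e ∈ w.edges,
        (if e = s(a, b) then some β else c e) = some α ∨
        (if e = s(a, b) then some β else c e) = some β := by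
      have h2 : (some β : Option ℕ) = some γ ∨ (some β : Option ℕ) = some δ := by
        have h3 := hcol s(a, b) hmem
        exact h3.imp (fun h4 => (if_pos rfl).symm.trans h4) (fun h4 => (if_pos rfl).symm.trans h4)
      rcases h2 with h2 | h2
      · refine ⟨δ, fun e he => ?_⟩
        rcases hcol e he with h3 | h3
        · right; exact h3.trans h2.symm
        · left; exact h3
      · refine ⟨γ, fun e he => ?_⟩
        rcases hcol e he with h3 | h3
        · left; exact h3
        · right; exact h3.trans h2.symm
    obtain ⟨α, hkey⟩ := key
    have ha : a ∈ w.support := Walk.fst_mem_support_of_mem_edges w hmem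
    have hw1 : (w.rotate a ha).IsCycle := hw.rotate ha
    have hrot := w.rotate_edges a ha
    have he1 : s(a, b) ∈ (w.rotate a ha).edges := hrot.mem_iff.mpr hmem
    obtain ⟨p, hp, hnab, hsub⟩ := cycle_path_aux hab.ne (w.rotate a ha) hw1 he1
    have hcp : ∀ e ∈ p.edges, c e = some α ∨ c e = some β := by
      intro e he
      have hne : e ≠ s(a, b) := fun h => hnab (h ▸ he)
      exact (hkey e (hrot.mem_iff.mp (hsub e he))).imp
        (fun h3 => (if_neg hne).symm.trans h3) (fun h3 => (if_neg hne).symm.trans h3)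
    have hnn : ¬ p.Nil := Walk.not_nil_of_ne hab.ne
    obtain ⟨x, hx, r, hpq⟩ := Walk.not_nil_iff.mp hnn
    have hhead : p.edges.head? = some s(a, x) := by
      rw [hpq, Walk.edges_cons, List.head?_cons]
    have hxmem : s(a, x) ∈ p.edges := by
      rw [hpq, Walk.edges_cons]; exact List.mem_cons_self
    have hcx : c s(a, x) = some α := by
      rcases hcp _ hxmem with h | h
      · exact h
      · exact absurd h (hcand.1 x hx)
    obtain ⟨y, hy, hlast, hymem⟩ := walk_last_edge p hnn
    have hcy : c s(b, y) = some α := by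
      rcases hcp _ hymem with h | h
      · exact h
      · exact absurd h (hcand.2 y hy)
    refine ⟨α, ⟨x, hx, fun h => hnab (h ▸ hxmem), hcx⟩,
      ⟨y, hy, fun h => hnab (h ▸ hymem), hcy⟩,
      p, s(a, x), s(b, y), hp, hcp, hhead, hcx, hlast, hcy⟩
  · rintro ⟨α, -, -, p, e₁, e₂, hp, hcp, -, -, -, -⟩
    have hnab : s(a, b) ∉ p.edges := by
      intro hc
      rcases hcp _ hc with h | h <;> rw [huncol] at h <;> exact Option.some_ne_none _ h.symm
    refine ⟨b, Walk.cons hab.symm p,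
      (Walk.cons_isCycle_iff p hab.symm).mpr ⟨hp, by rw [Sym2.eq_swap]; exact hnab⟩, β, α, ?_⟩
    intro e he
    rw [Walk.edges_cons] at he
    rcases List.mem_cons.mp he with h | h
    · left; rw [h]; exact if_pos Sym2.eq_swap
    · have hne : e ≠ s(a, b) := fun hc => hnab (hc ▸ h)
      exact ((hcp e h).imp (fun h4 => (if_neg hne).trans h4)
        (fun h4 => (if_neg hne).trans h4)).symm
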